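/- Let X be a real normed space, E ⊆ X, (f,G) : E → ℝ × X* a 1-jet, ω a modulus of continuity, and M ≥ 0 a constant such that f(y) + G(y)(x−y) + M·φ_ω(‖x−y‖) ≥ f(z) + G(z)(x−z) for all y, z ∈ E and x ∈ X. Then ‖G(y) − G(z)‖_* ≤ (4/3)·M·ω(‖y−z‖) for all y, z ∈ E. -/

import Mathlib

open Set

theorem stmt_7 {X : Type*} [NormedAddCommGroup X] [NormedSpace ℝ X]
    (ω φ : ℝ → ℝ)
    (hnonneg : ∀ t ∈ Ici (0:ℝ), 0 ≤ ω t)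
    (hmono : MonotoneOn ω (Ici (0:ℝ)))
    (hconc : ConcaveOn ℝ (Ici (0:ℝ)) ω)
    (h0 : ω 0 = 0)
    (h0' : Filter.Tendsto ω (nhdsWithin 0 (Ioi (0:ℝ))) (nhds 0))
    (hφ : ∀ t, φ t = ∫ s in (0:ℝ)..t, ω s)
    (E : Set X) (f : X → ℝ) (G : X → X →L[ℝ] ℝ) (M : ℝ) (hM : 0 ≤ M)
    (hjet : ∀ y ∈ E, ∀ z ∈ E, ∀ x : X,
      f z + G z (x - z) ≤ f y + G y (x - y) + M * φ ‖x - y‖) :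
    ∀ y ∈ E, ∀ z ∈ E, ‖G y - G z‖ ≤ 4 / 3 * M * ω ‖y - z‖ := by
  -- integrability of ω on nonnegative intervals
  have hωint : ∀ a b : ℝ, 0 ≤ a → a ≤ b → IntervalIntegrable ω MeasureTheory.volume a b := by
    intro a b ha hab
    refine (hmono.mono ?_).intervalIntegrable
    rw [uIcc_of_le hab]
    exact fun x hx => le_trans ha hx.1
  -- φ is monotone on [0, ∞)
  have hφmono : ∀ a b : ℝ, 0 ≤ a → a ≤ b → φ a ≤ φ b := by
    intro a b ha hab
    rw [hφ, hφ, ← intervalIntegral.integral_add_adjacent_intervals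
      (hωint 0 a le_rfl ha) (hωint a b ha hab)]
    have : 0 ≤ ∫ s in a..b, ω s :=
      intervalIntegral.integral_nonneg hab (fun u hu => hnonneg u (le_trans ha hu.1))
    linarith
  intro y hy z hz
  rcases eq_or_ne y z with rfl | hyz
  · simp [sub_self, h0]
  have hr : 0 < ‖y - z‖ := norm_sub_pos_iff.mpr hyz
  set r := ‖y - z‖ with hrdef
  have hωr : 0 ≤ ω r := hnonneg r (le_of_lt hr)
  -- key analytic estimate: φ(2r) ≤ 2 r ω(r)
  have hφ2r : φ (2 * r) ≤ 2 * r * ω r := by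
    have h2r : (0:ℝ) ≤ 2 * r := by linarith
    have hrefl_int : IntervalIntegrable (fun s => ω (2 * r - s))
        MeasureTheory.volume 0 (2 * r) := by
      refine AntitoneOn.intervalIntegrable ?_
      rw [uIcc_of_le h2r]
      intro s hs t ht hst
      exact hmono (by simp; linarith [ht.2] : 2 * r - t ∈ Ici (0:ℝ))
        (by simp; linarith [hs.2] : 2 * r - s ∈ Ici (0:ℝ)) (by linarith)
    have hrefl : (∫ s in (0:ℝ)..(2*r), ω (2 * r - s)) = ∫ s in (0:ℝ)..(2*r), ω s := by
      rw [intervalIntegral.integral_comp_sub_left ω (2*r)]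
      norm_num
    have hkey : (∫ s in (0:ℝ)..(2*r), (ω s + ω (2 * r - s)))
        ≤ ∫ s in (0:ℝ)..(2*r), 2 * ω r := by
      refine intervalIntegral.integral_mono_on h2r
        ((hωint 0 (2*r) le_rfl h2r).add hrefl_int) intervalIntegrable_const ?_
      intro s hs
      have hs0 : s ∈ Ici (0:ℝ) := hs.1
      have hs1 : 2 * r - s ∈ Ici (0:ℝ) := by simp; linarith [hs.2]
      have := hconc.2 hs0 hs1 (by norm_num : (0:ℝ) ≤ 1/2) (by norm_num : (0:ℝ) ≤ 1/2)
        (by norm_num)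
      simp only [smul_eq_mul] at this
      have heq : (1/2 : ℝ) * s + (1/2 : ℝ) * (2 * r - s) = r := by ring
      rw [heq] at this
      linarith
    rw [intervalIntegral.integral_add (hωint 0 (2*r) le_rfl h2r) hrefl_int, hrefl] at hkey
    rw [intervalIntegral.integral_const, smul_eq_mul] at hkey
    rw [hφ]
    linarith
  -- key linear estimate
  have key : ∀ v : X, (G z - G y) v ≤ 4 / 3 * M * ω r * ‖v‖ := by
    intro v
    rcases eq_or_ne v 0 with rfl | hv
    · simp
    have hv0 : (0:ℝ) < ‖v‖ := norm_pos_iff.mpr hv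
    set c := (3 * r / 2) / ‖v‖ with hcdef
    have hc0 : 0 < c := by positivity
    have hcv : ‖c • v‖ = 3 * r / 2 := by
      rw [norm_smul, Real.norm_eq_abs, abs_of_pos hc0, hcdef]
      field_simp
    set m := (2⁻¹ : ℝ) • (y + z) with hmdef
    set x := m + c • v with hxdef
    set x' := m - c • v with hx'def
    have h1 := hjet y hy z hz x
    have h2 := hjet z hz y hy x'
    have hxy : ‖x - y‖ ≤ 2 * r := by
      have hxyeq : x - y = (2⁻¹ : ℝ) • (z - y) + c • v := by
        rw [hxdef, hmdef]; module
      rw [hxyeq]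
      calc ‖(2⁻¹ : ℝ) • (z - y) + c • v‖ ≤ ‖(2⁻¹ : ℝ) • (z - y)‖ + ‖c • v‖ :=
            norm_add_le _ _
        _ = 2⁻¹ * r + 3 * r / 2 := by
            rw [hcv, norm_smul, Real.norm_eq_abs, ← norm_sub_rev y z]
            norm_num
            exact hrdef.symm
        _ = 2 * r := by ring
    have hx'z : ‖x' - z‖ ≤ 2 * r := by
      have hx'zeq : x' - z = (2⁻¹ : ℝ) • (y - z) - c • v := by
        rw [hx'def, hmdef]; module
      rw [hx'zeq]
      calc ‖(2⁻¹ : ℝ) • (y - z) - c • v‖ ≤ ‖(2⁻¹ : ℝ) • (y - z)‖ + ‖c • v‖ :=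
            norm_sub_le _ _
        _ = 2⁻¹ * r + 3 * r / 2 := by
            rw [hcv, norm_smul, Real.norm_eq_abs]
            norm_num
            exact hrdef.symm
        _ = 2 * r := by ring
    have hbound1 : M * φ ‖x - y‖ ≤ M * (2 * r * ω r) :=
      mul_le_mul_of_nonneg_left (le_trans (hφmono _ _ (norm_nonneg _) hxy) hφ2r) hM
    have hbound2 : M * φ ‖x' - z‖ ≤ M * (2 * r * ω r) :=
      mul_le_mul_of_nonneg_left (le_trans (hφmono _ _ (norm_nonneg _) hx'z) hφ2r) hM
    -- combine the two jet inequalities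
    have hdiff : G z (x - z) - G z (x' - z) - (G y (x - y) - G y (x' - y))
        = (2 * c) * ((G z - G y) v) := by
      have hxx' : x - x' = (2 * c) • v := by
        rw [hxdef, hx'def]; module
      have e1 : G z (x - z) - G z (x' - z) = G z (x - x') := by
        rw [← map_sub]; congr 1; abel
      have e2 : G y (x - y) - G y (x' - y) = G y (x - x') := by
        rw [← map_sub]; congr 1; abel
      rw [e1, e2, hxx', map_smul, map_smul, smul_eq_mul, smul_eq_mul,
        ContinuousLinearMap.sub_apply]
      ring
    have hsum : (2 * c) * ((G z - G y) v) ≤ 4 * (M * (r * ω r)) := by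
      rw [← hdiff]
      nlinarith [h1, h2, hbound1, hbound2]
    have h2c : 2 * c = 3 * r / ‖v‖ := by rw [hcdef]; ring
    rw [h2c] at hsum
    rw [div_mul_eq_mul_div, div_le_iff₀ hv0] at hsum
    have : 3 * r * ((G z - G y) v) ≤ 4 * (M * (r * ω r)) * ‖v‖ := by linarith
    nlinarith [this]
  have hC : 0 ≤ 4 / 3 * M * ω r := by positivity
  rw [norm_sub_rev]
  refine ContinuousLinearMap.opNorm_le_bound _ hC ?_
  intro v
  rw [Real.norm_eq_abs, abs_le]
  constructor
  · have := key (-v)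
    simp only [map_neg, norm_neg] at this
    linarith
  · exact key v
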